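/- Let A be a commutative normed ring and 𝔭 a prime ideal of A. Let 0 → M₁ → M →^θ M₂ → 0 be a short exact sequence of analytic A-modules, i.e. M₁ is a submodule of M with the restricted norm and θ is a surjective morphism of analytic A-modules with kernel M₁. Suppose that M₁ is 𝔭-closed in M (M₁ ∩ 𝔭M = 𝔭M₁), that θ is strict, and that both M₁ and M₂ admit analytically projective 𝔭-representations. Then M admits an analytically projective 𝔭-representation; moreover the representing surjection π: F → M can be chosen so that π⁻¹(𝔭M) = 𝔭F. -/

import Mathlib

/-- An *analytic `A`-module* over a normed ring `A`: a complete normed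
`A`-module (with `‖a • m‖ ≤ ‖a‖·‖m‖`). -/
structure AnalyticModule (A : Type) [NormedCommRing A] where
  carrier : Type
  [grp : NormedAddCommGroup carrier]
  [mod : Module A carrier]
  [bsmul : IsBoundedSMul A carrier]
  [compl : CompleteSpace carrier]

attribute [instance] AnalyticModule.grp AnalyticModule.mod
  AnalyticModule.bsmul AnalyticModule.compl

variable {A : Type} [NormedCommRing A]

/-- A *morphism of analytic `A`-modules* is a continuous, bounded `A`-linear
map. -/
def IsAnalyticMorphism {M N : AnalyticModule A}
    (f : M.carrier →ₗ[A] N.carrier) : Prop :=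
  Continuous f ∧ ∃ C : ℝ, ∀ m : M.carrier, ‖f m‖ ≤ C * ‖m‖

/-- A surjective morphism is *strict* if every norm-bounded family in the
target is the image of a norm-bounded family in the source. -/
def IsStrictMorphism {M N : AnalyticModule A}
    (f : M.carrier →ₗ[A] N.carrier) : Prop :=
  ∀ (κ : Type) (ν : κ → N.carrier), (∃ C : ℝ, ∀ k, ‖ν k‖ ≤ C) →
    ∃ μ : κ → M.carrier, (∀ k, f (μ k) = ν k) ∧ ∃ C : ℝ, ∀ k, ‖μ k‖ ≤ C

/-- `P` is *analytically projective* if every morphism `θ : P → N` lifts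
through every strict surjective morphism `ε : M → N`. -/
def IsAnalyticallyProjective (P : AnalyticModule A) : Prop :=
  ∀ (M N : AnalyticModule A) (ε : M.carrier →ₗ[A] N.carrier)
    (θ : P.carrier →ₗ[A] N.carrier),
    IsAnalyticMorphism ε → Function.Surjective ε → IsStrictMorphism ε →
    IsAnalyticMorphism θ →
    ∃ σ : P.carrier →ₗ[A] M.carrier, IsAnalyticMorphism σ ∧ ε ∘ₗ σ = θ

/-- An *analytically projective `𝔭`-representation* of `M`: a strict surjective
morphism `π : F → M` with `F` analytically projective and `ker π ⊆ 𝔭F`. -/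
def HasAnalyticallyProjectiveRep (𝔭 : Ideal A) (M : AnalyticModule A) : Prop :=
  ∃ (F : AnalyticModule A) (π : F.carrier →ₗ[A] M.carrier),
    IsAnalyticallyProjective F ∧ IsAnalyticMorphism π ∧
    Function.Surjective π ∧
    LinearMap.ker π ≤ 𝔭 • (⊤ : Submodule A F.carrier)

@[reducible] def AnalyticModule.prod (P Q : AnalyticModule A) : AnalyticModule A :=
  AnalyticModule.mk (P.carrier × Q.carrier)

lemma isAnalyticMorphism_comp {P Q R : AnalyticModule A}
    {g : Q.carrier →ₗ[A] R.carrier} {f : P.carrier →ₗ[A] Q.carrier}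
    (hg : IsAnalyticMorphism g) (hf : IsAnalyticMorphism f) :
    IsAnalyticMorphism (g ∘ₗ f) := by
  obtain ⟨hgc, Cg, hCg⟩ := hg
  obtain ⟨hfc, Cf, hCf⟩ := hf
  refine ⟨hgc.comp hfc, |Cg| * |Cf|, fun m => ?_⟩
  have h1 : ‖g (f m)‖ ≤ |Cg| * ‖f m‖ :=
    (hCg _).trans (mul_le_mul_of_nonneg_right (le_abs_self _) (norm_nonneg _))
  have h2 : ‖f m‖ ≤ |Cf| * ‖m‖ :=
    (hCf _).trans (mul_le_mul_of_nonneg_right (le_abs_self _) (norm_nonneg _))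
  calc ‖(g ∘ₗ f) m‖ ≤ |Cg| * ‖f m‖ := h1
    _ ≤ |Cg| * (|Cf| * ‖m‖) := mul_le_mul_of_nonneg_left h2 (abs_nonneg _)
    _ = |Cg| * |Cf| * ‖m‖ := by ring

lemma isAnalyticMorphism_add {P Q : AnalyticModule A}
    {f g : P.carrier →ₗ[A] Q.carrier}
    (hf : IsAnalyticMorphism f) (hg : IsAnalyticMorphism g) :
    IsAnalyticMorphism (f + g) := by
  obtain ⟨hfc, Cf, hCf⟩ := hf
  obtain ⟨hgc, Cg, hCg⟩ := hg
  refine ⟨hfc.add hgc, Cf + Cg, fun m => ?_⟩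
  calc ‖f m + g m‖ ≤ ‖f m‖ + ‖g m‖ := norm_add_le _ _
    _ ≤ Cf * ‖m‖ + Cg * ‖m‖ := add_le_add (hCf m) (hCg m)
    _ = (Cf + Cg) * ‖m‖ := by ring

lemma isAnalyticMorphism_fst (P Q : AnalyticModule A) :
    IsAnalyticMorphism (M := P.prod Q) (LinearMap.fst A P.carrier Q.carrier) :=
  ⟨continuous_fst, 1, fun m => by simpa using norm_fst_le m⟩

lemma isAnalyticMorphism_snd (P Q : AnalyticModule A) :
    IsAnalyticMorphism (M := P.prod Q) (LinearMap.snd A P.carrier Q.carrier) :=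
  ⟨continuous_snd, 1, fun m => by simpa using norm_snd_le m⟩

lemma isAnalyticMorphism_inl (P Q : AnalyticModule A) :
    IsAnalyticMorphism (N := P.prod Q) (LinearMap.inl A P.carrier Q.carrier) :=
  ⟨continuous_id.prodMk continuous_const, 1, fun m => by
    simp [Prod.norm_def]⟩

lemma isAnalyticMorphism_inr (P Q : AnalyticModule A) :
    IsAnalyticMorphism (N := P.prod Q) (LinearMap.inr A P.carrier Q.carrier) :=
  ⟨continuous_const.prodMk continuous_id, 1, fun m => by
    simp [Prod.norm_def]⟩

lemma comap_smul_top_eq {𝔭 : Ideal A} {F M : AnalyticModule A}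
    (π : F.carrier →ₗ[A] M.carrier) (hs : Function.Surjective π)
    (hk : LinearMap.ker π ≤ 𝔭 • (⊤ : Submodule A F.carrier)) :
    (𝔭 • (⊤ : Submodule A M.carrier)).comap π
      = 𝔭 • (⊤ : Submodule A F.carrier) := by
  apply le_antisymm
  · intro x hx
    have h1 : (𝔭 • (⊤ : Submodule A M.carrier))
        = Submodule.map π (𝔭 • (⊤ : Submodule A F.carrier)) := by
      rw [Submodule.map_smul'', Submodule.map_top, LinearMap.range_eq_top.mpr hs]
    rw [Submodule.mem_comap, h1] at hx
    obtain ⟨z, hz, hzx⟩ := hx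
    have hmem : x - z ∈ LinearMap.ker π := by
      simp [LinearMap.mem_ker, map_sub, hzx]
    have := Submodule.add_mem _ (hk hmem) hz
    simpa using this
  · intro x hx
    rw [Submodule.mem_comap]
    have : π x ∈ Submodule.map π (𝔭 • (⊤ : Submodule A F.carrier)) :=
      Submodule.mem_map_of_mem hx
    rw [Submodule.map_smul''] at this
    exact Submodule.smul_mono le_rfl le_top this

/-- Membership transported along a morphism into `𝔭 • ⊤`. -/
lemma apply_mem_smul_top {𝔭 : Ideal A} {P Q : AnalyticModule A}
    (f : P.carrier →ₗ[A] Q.carrier) {x : P.carrier}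
    (hx : x ∈ 𝔭 • (⊤ : Submodule A P.carrier)) :
    f x ∈ 𝔭 • (⊤ : Submodule A Q.carrier) := by
  have : f x ∈ Submodule.map f (𝔭 • (⊤ : Submodule A P.carrier)) :=
    Submodule.mem_map_of_mem hx
  rw [Submodule.map_smul''] at this
  exact Submodule.smul_mono le_rfl le_top this

/-- Let `A` be a commutative normed ring and `𝔭` a prime ideal
of `A`.  Let `0 → M₁ → M →^θ M₂ → 0` be a short exact sequence of analytic
`A`-modules: here `M₁` is embedded in `M` by an isometric linear map `incl`
whose range is the kernel of `θ`, and `θ` is a surjective morphism.  If the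
image of `M₁` is `𝔭`-closed in `M`, `θ` is strict, and both `M₁` and `M₂` admit
analytically projective `𝔭`-representations, then so does `M`; moreover the
representing surjection `π : F → M` can be chosen with `π⁻¹(𝔭M) = 𝔭F`. -/
theorem hasAnalyticallyProjectiveRep_of_ses (𝔭 : Ideal A) [𝔭.IsPrime]
    (M M₁ M₂ : AnalyticModule A)
    (incl : M₁.carrier →ₗ[A] M.carrier) (hincl : ∀ x, ‖incl x‖ = ‖x‖)
    (θ : M.carrier →ₗ[A] M₂.carrier)
    (hθm : IsAnalyticMorphism θ) (hθs : Function.Surjective θ)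
    (hθstrict : IsStrictMorphism θ)
    (hexact : LinearMap.range incl = LinearMap.ker θ)
    (hclosed : LinearMap.range incl ⊓ 𝔭 • (⊤ : Submodule A M.carrier)
      = 𝔭 • LinearMap.range incl)
    (h1 : HasAnalyticallyProjectiveRep 𝔭 M₁)
    (h2 : HasAnalyticallyProjectiveRep 𝔭 M₂) :
    ∃ (F : AnalyticModule A) (π : F.carrier →ₗ[A] M.carrier),
      IsAnalyticallyProjective F ∧ IsAnalyticMorphism π ∧
      Function.Surjective π ∧
      (𝔭 • (⊤ : Submodule A M.carrier)).comap π
        = 𝔭 • (⊤ : Submodule A F.carrier) := by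
  obtain ⟨F₁, π₁, hF₁proj, hπ₁m, hπ₁s, hπ₁k⟩ := h1
  obtain ⟨F₂, π₂, hF₂proj, hπ₂m, hπ₂s, hπ₂k⟩ := h2
  -- lift `π₂` through the strict surjection `θ`
  obtain ⟨σ, hσm, hσθ⟩ := hF₂proj M M₂ θ π₂ hθm hθs hθstrict hπ₂m
  have hinclm : IsAnalyticMorphism incl :=
    ⟨(AddMonoidHomClass.isometry_of_norm incl hincl).continuous,
      1, fun m => by rw [hincl, one_mul]⟩
  have hinclinj : Function.Injective incl :=
    (AddMonoidHomClass.isometry_of_norm incl hincl).injective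
  refine ⟨F₁.prod F₂,
    (incl ∘ₗ π₁) ∘ₗ LinearMap.fst A F₁.carrier F₂.carrier
      + σ ∘ₗ LinearMap.snd A F₁.carrier F₂.carrier, ?_, ?_, ?_, ?_⟩
  · -- projectivity of the product
    intro Mm Nn ε θ' hεm hεs hεstrict hθ'm
    obtain ⟨σ₁, hσ₁m, hσ₁e⟩ := hF₁proj Mm Nn ε
      (θ' ∘ₗ LinearMap.inl A F₁.carrier F₂.carrier) hεm hεs hεstrict
      (isAnalyticMorphism_comp hθ'm (isAnalyticMorphism_inl F₁ F₂))
    obtain ⟨σ₂, hσ₂m, hσ₂e⟩ := hF₂proj Mm Nn ε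
      (θ' ∘ₗ LinearMap.inr A F₁.carrier F₂.carrier) hεm hεs hεstrict
      (isAnalyticMorphism_comp hθ'm (isAnalyticMorphism_inr F₁ F₂))
    refine ⟨σ₁ ∘ₗ LinearMap.fst A F₁.carrier F₂.carrier
      + σ₂ ∘ₗ LinearMap.snd A F₁.carrier F₂.carrier,
      isAnalyticMorphism_add
        (isAnalyticMorphism_comp hσ₁m (isAnalyticMorphism_fst F₁ F₂))
        (isAnalyticMorphism_comp hσ₂m (isAnalyticMorphism_snd F₁ F₂)), ?_⟩
    apply LinearMap.ext
    rintro ⟨x, y⟩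
    have e1 := LinearMap.congr_fun hσ₁e x
    have e2 := LinearMap.congr_fun hσ₂e y
    simp only [LinearMap.comp_apply, LinearMap.inl_apply, LinearMap.inr_apply] at e1 e2
    simp only [LinearMap.comp_apply, LinearMap.add_apply, LinearMap.fst_apply,
      LinearMap.snd_apply, map_add, e1, e2]
    rw [← map_add]
    norm_num
  · exact isAnalyticMorphism_add
      (isAnalyticMorphism_comp (isAnalyticMorphism_comp hinclm hπ₁m)
        (isAnalyticMorphism_fst F₁ F₂))
      (isAnalyticMorphism_comp hσm (isAnalyticMorphism_snd F₁ F₂))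
  · -- surjectivity
    intro m
    obtain ⟨y, hy⟩ := hπ₂s (θ m)
    have hθσ : θ (σ y) = π₂ y := LinearMap.congr_fun hσθ y
    have hker : m - σ y ∈ LinearMap.ker θ := by
      simp [LinearMap.mem_ker, map_sub, hθσ, hy]
    rw [← hexact] at hker
    obtain ⟨m₁, hm₁⟩ := hker
    obtain ⟨x, hx⟩ := hπ₁s m₁
    refine ⟨(x, y), ?_⟩
    simp only [LinearMap.add_apply, LinearMap.comp_apply, LinearMap.fst_apply,
      LinearMap.snd_apply, hx, hm₁]
    abel
  · -- the comap identity
    apply comap_smul_top_eq _ _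
    · -- kernel condition
      rintro ⟨x, y⟩ hxy
      have h0 : incl (π₁ x) + σ y = 0 := hxy
      have hy2 : π₂ y = 0 := by
        have h1 := congrArg θ h0
        have hk : θ (incl (π₁ x)) = 0 := by
          have : incl (π₁ x) ∈ LinearMap.ker θ := hexact ▸ ⟨π₁ x, rfl⟩
          exact this
        have hθσ : θ (σ y) = π₂ y := LinearMap.congr_fun hσθ y
        simpa [map_add, hk, hθσ] using h1
      have hyp : y ∈ 𝔭 • (⊤ : Submodule A F₂.carrier) := hπ₂k hy2
      have hσy : σ y ∈ 𝔭 • (⊤ : Submodule A M.carrier) :=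
        apply_mem_smul_top σ hyp
      have hiπ : incl (π₁ x) ∈ 𝔭 • (⊤ : Submodule A M.carrier) := by
        have : incl (π₁ x) = -(σ y) := by
          rw [eq_neg_iff_add_eq_zero]; exact h0
        rw [this]; exact Submodule.neg_mem _ hσy
      have hmem : incl (π₁ x) ∈ 𝔭 • LinearMap.range incl := by
        rw [← hclosed]; exact ⟨⟨π₁ x, rfl⟩, hiπ⟩
      have hmap : 𝔭 • LinearMap.range incl
          = Submodule.map incl (𝔭 • (⊤ : Submodule A M₁.carrier)) := by
        rw [Submodule.map_smul'', Submodule.map_top]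
      rw [hmap] at hmem
      obtain ⟨w, hw, hweq⟩ := hmem
      have hπ₁x : π₁ x ∈ 𝔭 • (⊤ : Submodule A M₁.carrier) := by
        rwa [hinclinj hweq] at hw
      have hx𝔭 : x ∈ 𝔭 • (⊤ : Submodule A F₁.carrier) := by
        rw [← comap_smul_top_eq π₁ hπ₁s hπ₁k]
        exact hπ₁x
      have hinlm : ((x, y) : F₁.carrier × F₂.carrier)
          = LinearMap.inl A F₁.carrier F₂.carrier x
            + LinearMap.inr A F₁.carrier F₂.carrier y := by
        simp
      rw [hinlm]
      exact Submodule.add_mem _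
        (apply_mem_smul_top (P := F₁) (Q := F₁.prod F₂)
          (LinearMap.inl A F₁.carrier F₂.carrier) hx𝔭)
        (apply_mem_smul_top (P := F₂) (Q := F₁.prod F₂)
          (LinearMap.inr A F₁.carrier F₂.carrier) hyp)
    · -- surjectivity again (reuse)
      intro m
      obtain ⟨y, hy⟩ := hπ₂s (θ m)
      have hθσ : θ (σ y) = π₂ y := LinearMap.congr_fun hσθ y
      have hker : m - σ y ∈ LinearMap.ker θ := by
        simp [LinearMap.mem_ker, map_sub, hθσ, hy]
      rw [← hexact] at hker
      obtain ⟨m₁, hm₁⟩ := hker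
      obtain ⟨x, hx⟩ := hπ₁s m₁
      refine ⟨(x, y), ?_⟩
      simp only [LinearMap.add_apply, LinearMap.comp_apply, LinearMap.fst_apply,
        LinearMap.snd_apply, hx, hm₁]
      abel
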